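/- In the category of graphs arc-labelled by an alphabet Σ (the slice category over the one-node graph with arc set Σ), a labelled graph is separated for the double negation topology if and only if it is a labelled transition system, i.e., for every pair of nodes x, y and every label α there is at most one α-labelled arc from x to y. -/

import Mathlib

/-- A directed graph: nodes, arcs, source and target maps. -/
structure DirGraph where
  N : Type
  A : Type
  src : A → N
  tgt : A → N

/-- A graph morphism. -/
@[ext]
structure Hom (G H : DirGraph) where
  fN : G.N → H.N
  fA : G.A → H.A
  hsrc : ∀ a, H.src (fA a) = fN (G.src a)
  htgt : ∀ a, H.tgt (fA a) = fN (G.tgt a)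

/-- Composition of graph morphisms. -/
def Hom.comp {G H K : DirGraph} (g : Hom H K) (f : Hom G H) : Hom G K where
  fN := g.fN ∘ f.fN
  fA := g.fA ∘ f.fA
  hsrc a := by simp [g.hsrc, f.hsrc]
  htgt a := by simp [g.htgt, f.htgt]

/-- A subgraph of `G`, given by a set of nodes and a set of arcs whose
endpoints belong to the node set. -/
def IsSubgraph (G : DirGraph) (SN : Set G.N) (SA : Set G.A) : Prop :=
  ∀ a ∈ SA, G.src a ∈ SN ∧ G.tgt a ∈ SN

/-- The subgraph of `Y` determined by node set `SN` and arc set `SA`. -/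
def subG (Y : DirGraph) (SN : Set Y.N) (SA : Set Y.A) (h : IsSubgraph Y SN SA) : DirGraph where
  N := SN
  A := SA
  src a := ⟨Y.src a.val, (h a.val a.prop).1⟩
  tgt a := ⟨Y.tgt a.val, (h a.val a.prop).2⟩

/-- The inclusion of a subgraph. -/
def incl (Y : DirGraph) (SN : Set Y.N) (SA : Set Y.A) (h : IsSubgraph Y SN SA) :
    Hom (subG Y SN SA h) Y :=
  ⟨Subtype.val, Subtype.val, fun _ => rfl, fun _ => rfl⟩

/-- A graph arc-labelled by an alphabet `S` (an object of the slice over the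
one-node graph with arc set `S`). -/
structure LGraph (S : Type) where
  G : DirGraph
  lab : G.A → S

/-- A morphism of labelled graphs: a graph morphism preserving labels. -/
@[ext]
structure LHom {S : Type} (X Y : LGraph S) where
  toHom : Hom X.G Y.G
  hlab : ∀ a, Y.lab (toHom.fA a) = X.lab a

/-- Composition of labelled graph morphisms. -/
def LHom.comp {S : Type} {X Y Z : LGraph S} (g : LHom Y Z) (f : LHom X Y) : LHom X Z :=
  ⟨g.toHom.comp f.toHom, fun a => by
    simpa [Hom.comp, g.hlab] using f.hlab a⟩

/-- The labelled subgraph of `Y` on node set `Set.univ` and an arc set `SA`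
(a dense subobject for the double negation topology on the slice). -/
def lsub {S : Type} (Y : LGraph S) (SA : Set Y.G.A) (h : IsSubgraph Y.G Set.univ SA) :
    LGraph S :=
  ⟨subG Y.G Set.univ SA h, fun a => Y.lab a.val⟩

/-- The inclusion of a labelled subgraph. -/
def lincl {S : Type} (Y : LGraph S) (SA : Set Y.G.A) (h : IsSubgraph Y.G Set.univ SA) :
    LHom (lsub Y SA h) Y :=
  ⟨incl Y.G Set.univ SA h, fun _ => rfl⟩

/-- A labelled graph is separated for the double negation topology on the slice:
morphisms into it agreeing on a dense (all-nodes) labelled subgraph are equal. -/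
def LSeparated {S : Type} (G : LGraph S) : Prop :=
  ∀ (Y : LGraph S) (SA : Set Y.G.A) (h : IsSubgraph Y.G Set.univ SA)
    (g₁ g₂ : LHom Y G),
      g₁.comp (lincl Y SA h) = g₂.comp (lincl Y SA h) → g₁ = g₂

/-- a `Σ`-labelled graph is separated for the double negation
topology on the slice iff it is a labelled transition system: for each pair of
nodes and each label there is at most one arc between them with that label. -/
theorem lseparated_iff_lts {S : Type} (G : LGraph S) :
    LSeparated G ↔
      ∀ a b : G.G.A, G.G.src a = G.G.src b → G.G.tgt a = G.G.tgt b →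
        G.lab a = G.lab b → a = b := by
  constructor
  · intro hsep a b hs ht hl
    let Y : LGraph S :=
      ⟨⟨G.G.N, Unit, fun _ => G.G.src a, fun _ => G.G.tgt a⟩, fun _ => G.lab a⟩
    have h : IsSubgraph Y.G Set.univ (∅ : Set Y.G.A) :=
      fun x hx => absurd hx (Set.notMem_empty x)
    let g₁ : LHom Y G := ⟨⟨id, fun _ => a, fun _ => rfl, fun _ => rfl⟩, fun _ => rfl⟩
    let g₂ : LHom Y G :=
      ⟨⟨id, fun _ => b, fun _ => hs.symm, fun _ => ht.symm⟩, fun _ => hl.symm⟩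
    have he : g₁.comp (lincl Y ∅ h) = g₂.comp (lincl Y ∅ h) := by
      apply LHom.ext
      apply Hom.ext
      · rfl
      · funext x
        exact absurd x.prop (Set.notMem_empty _)
    have hgg := hsep Y ∅ h g₁ g₂ he
    exact congrArg (fun f => f.toHom.fA ()) hgg
  · intro hlts Y SA h g₁ g₂ he
    have hN : g₁.toHom.fN = g₂.toHom.fN := by
      funext x
      exact congrArg (fun f => f.toHom.fN ⟨x, trivial⟩) he
    apply LHom.ext
    apply Hom.ext
    · exact hN
    · funext a
      apply hlts
      · rw [g₁.toHom.hsrc, g₂.toHom.hsrc, hN]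
      · rw [g₁.toHom.htgt, g₂.toHom.htgt, hN]
      · rw [g₁.hlab, g₂.hlab]
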